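/- (Vandermonde's identity for the φ functions.) For every natural number m with m < p^k and all x, y ∈ R, one has φ_m(x+y) = Σ_{i=0}^{m} φ_i(x)·φ_{m−i}(y), the equality holding in ℤ/pℤ (here x+y is computed in R = ℤ/p^kℤ). -/
import Mathlib


/-- The binomial phi function `φ_m : ℤ/p^kℤ → ℤ/pℤ`, `φ_m(x) = C(x̄, m) mod p`. -/
def phi (p k m : ℕ) (x : ZMod (p ^ k)) : ZMod p := (x.val.choose m : ZMod p)

lemma choose_add_pow_cast (p k m n : ℕ) [hp : Fact p.Prime] (hm : m < p ^ k) :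
    (((n + p ^ k).choose m : ℕ) : ZMod p) = (n.choose m : ZMod p) := by
  rw [Nat.add_choose_eq]
  rw [Finset.Nat.sum_antidiagonal_eq_sum_range_succ (fun i j => n.choose i * (p ^ k).choose j)]
  rw [Finset.sum_range_succ]
  have h0 : ∀ i ∈ Finset.range m,
      ((n.choose i * (p ^ k).choose (m - i) : ℕ) : ZMod p) = 0 := by
    intro i hi
    rw [Finset.mem_range] at hi
    have h1 : m - i ≠ 0 := by omega
    have h2 : m - i ≠ p ^ k := by omega
    have := hp.out.dvd_choose_pow h1 h2
    push_cast
    rw [(ZMod.natCast_eq_zero_iff _ _).2 this]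
    ring
  push_cast [Finset.sum_congr rfl h0] at *
  simp [Finset.sum_congr rfl h0]

/-- **Vandermonde's identity for phi functions.** For `m < p^k` and
`x, y ∈ R = ℤ/p^kℤ`, `φ_m(x+y) = Σ_{i=0}^{m} φ_i(x)·φ_{m−i}(y)` in `ℤ/pℤ`. -/
theorem stmt_8 (p k m : ℕ) [Fact p.Prime] (hk : 1 ≤ k) (hm : m < p ^ k)
    (x y : ZMod (p ^ k)) :
    phi p k m (x + y) = ∑ i ∈ Finset.range (m + 1), phi p k i x * phi p k (m - i) y := by
  have hp1 : 1 < p ^ k := (Fact.out : p.Prime).one_lt.trans_le (Nat.le_self_pow (by omega) p)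
  have hlt : x.val < p ^ k := x.val_lt
  have hlt' : y.val < p ^ k := y.val_lt
  have hval : (x + y).val = (x.val + y.val) % (p ^ k) := ZMod.val_add x y
  have key : ((x.val + y.val).choose m : ZMod p) = ((x + y).val.choose m : ZMod p) := by
    rcases Nat.lt_or_ge (x.val + y.val) (p ^ k) with h | h
    · rw [hval, Nat.mod_eq_of_lt h]
    · have heq : x.val + y.val = (x.val + y.val) % (p ^ k) + p ^ k := by
        have hmd := Nat.mod_add_div (x.val + y.val) (p ^ k)
        have hdiv : (x.val + y.val) / (p ^ k) = 1 := by
          have h2 : (x.val + y.val) / (p ^ k) < 2 := Nat.div_lt_of_lt_mul (by omega)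
          have h1 : 1 ≤ (x.val + y.val) / (p ^ k) := (Nat.one_le_div_iff (by omega)).2 h
          omega
        rw [hdiv, mul_one] at hmd
        omega
      rw [heq, choose_add_pow_cast p k m _ hm, hval]
  unfold phi
  rw [← key, Nat.add_choose_eq,
    Finset.Nat.sum_antidiagonal_eq_sum_range_succ (fun i j => x.val.choose i * y.val.choose j)]
  push_cast
  rfl
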